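/- arXiv:2303.10424 — 3 statements merged into one kernel-verified Lean document; each statement's English description precedes it below -/
import Mathlib

section
/- For every z in the upper half-plane ℍ and every s ∈ ℂ, the family over coprime integer pairs (c,d) of the terms (Im z)^s · (|cz+d|²)^{−s} is summable (absolutely convergent) if and only if Re s > 1. -/
open Complex

lemma aux_lin_ne_zero (z : ℂ) (hz : 0 < z.im) {c d : ℤ} (h : ¬(c = 0 ∧ d = 0)) :
    (c : ℂ) * z + d ≠ 0 := by
  intro h0
  have him : (c : ℝ) * z.im = 0 := by
    have := congrArg Complex.im h0
    simpa using this
  have hc : c = 0 := by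
    exact_mod_cast (mul_eq_zero.mp him).resolve_right hz.ne'
  subst hc
  have hd : d = 0 := by
    simpa using h0
  exact h ⟨rfl, hd⟩

lemma aux_not_summable_of_le {ι : Type*} [Infinite ι] {f : ι → ℝ} {ε : ℝ} (hε : 0 < ε)
    (h : ∀ i, ε ≤ f i) : ¬ Summable f := by
  intro hs
  have h2 : ∀ᶠ i in Filter.cofinite, f i < ε :=
    hs.tendsto_cofinite_zero.eventually (gt_mem_nhds hε)
  obtain ⟨i, hi⟩ := h2.exists
  exact absurd (h i) (not_le.mpr hi)

noncomputable instance : Infinite {p : ℤ × ℤ // Int.gcd p.1 p.2 = 1} :=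
  Infinite.of_injective (fun d : ℤ => (⟨(1, d), by simp [Int.gcd]⟩ : {p : ℤ × ℤ // Int.gcd p.1 p.2 = 1}))
    (fun a b hab => by simpa using congrArg (fun p : {p : ℤ × ℤ // Int.gcd p.1 p.2 = 1} => (p : ℤ × ℤ).2) hab)

lemma aux_summable_of_lt (z : ℂ) (hz : 0 < z.im) {k : ℝ} (hk : 2 < k) :
    Summable (fun p : {p : ℤ × ℤ // Int.gcd p.1 p.2 = 1} =>
      ‖(p : ℤ × ℤ).1 * z + (p : ℤ × ℤ).2‖ ^ (-k)) := by
  set Z : UpperHalfPlane := ⟨z, hz⟩ with hZ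
  have hB := (EisensteinSeries.summable_one_div_norm_rpow hk).mul_left
    ((EisensteinSeries.r Z) ^ (-k))
  have hinj : Function.Injective
      (fun p : {p : ℤ × ℤ // Int.gcd p.1 p.2 = 1} => (![(p : ℤ × ℤ).1, (p : ℤ × ℤ).2] : Fin 2 → ℤ)) := by
    intro a b hab
    apply Subtype.ext
    have h0 := congrFun hab 0
    have h1 := congrFun hab 1
    simp only [Matrix.cons_val_zero, Matrix.cons_val_one, Matrix.head_cons] at h0 h1
    exact Prod.ext h0 h1
  have hcomp := hB.comp_injective hinj
  apply hcomp.of_nonneg_of_le (fun p => Real.rpow_nonneg (norm_nonneg _) _)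
  intro p
  have hb := EisensteinSeries.summand_bound Z (by linarith : (0:ℝ) ≤ k)
    ![(p : ℤ × ℤ).1, (p : ℤ × ℤ).2]
  simpa using hb

lemma aux_ne_both_zero {p : ℤ × ℤ} (h : Int.gcd p.1 p.2 = 1) : ¬(p.1 = 0 ∧ p.2 = 0) := by
  rintro ⟨h1, h2⟩
  rw [h1, h2] at h
  simp [Int.gcd] at h

lemma aux_abs_pos (z : ℂ) (hz : 0 < z.im) {p : ℤ × ℤ} (h : Int.gcd p.1 p.2 = 1) :
    0 < ‖(p.1 : ℂ) * z + p.2‖ :=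
  norm_pos_iff.mpr (aux_lin_ne_zero z hz (aux_ne_both_zero h))

lemma aux_not_summable_nonpos (z : ℂ) (hz : 0 < z.im) {k : ℝ} (hk : k ≤ 0) :
    ¬ Summable (fun p : {p : ℤ × ℤ // Int.gcd p.1 p.2 = 1} =>
      ‖(p : ℤ × ℤ).1 * z + (p : ℤ × ℤ).2‖ ^ (-k)) := by
  set Z : UpperHalfPlane := ⟨z, hz⟩ with hZ
  set m : ℝ := min (EisensteinSeries.r Z) 1 with hm
  have hmpos : 0 < m := lt_min (EisensteinSeries.r_pos Z) one_pos
  apply aux_not_summable_of_le (Real.rpow_pos_of_pos hmpos (-k))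
  intro p
  have hx : (![(p : ℤ × ℤ).1, (p : ℤ × ℤ).2] : Fin 2 → ℤ) ≠ 0 := by
    intro h0
    have h1 := congrFun h0 0
    have h2 := congrFun h0 1
    simp only [Matrix.cons_val_zero, Matrix.cons_val_one, Matrix.head_cons, Pi.zero_apply] at h1 h2
    exact aux_ne_both_zero p.2 ⟨h1, h2⟩
  have hnorm1 : (1 : ℝ) ≤ ‖(![(p : ℤ × ℤ).1, (p : ℤ × ℤ).2] : Fin 2 → ℤ)‖ := by
    rw [EisensteinSeries.norm_eq_max_natAbs]
    have : (![(p : ℤ × ℤ).1, (p : ℤ × ℤ).2] : Fin 2 → ℤ) 0 ≠ 0 ∨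
        (![(p : ℤ × ℤ).1, (p : ℤ × ℤ).2] : Fin 2 → ℤ) 1 ≠ 0 := by
      by_contra hcon
      push_neg at hcon
      exact hx (funext (Fin.forall_fin_two.mpr ⟨hcon.1, hcon.2⟩))
    rcases this with h | h
    · have := Int.one_le_abs (by exact_mod_cast h)
      have h1 : 1 ≤ (((![(p : ℤ × ℤ).1, (p : ℤ × ℤ).2] : Fin 2 → ℤ) 0).natAbs : ℝ) := by
        exact_mod_cast Int.natAbs_pos.mpr h
      exact h1.trans (by exact_mod_cast le_max_left _ _)
    · have h1 : 1 ≤ (((![(p : ℤ × ℤ).1, (p : ℤ × ℤ).2] : Fin 2 → ℤ) 1).natAbs : ℝ) := by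
        exact_mod_cast Int.natAbs_pos.mpr h
      exact h1.trans (by exact_mod_cast le_max_right _ _)
  have hmA : m ≤ ‖(p : ℤ × ℤ).1 * z + (p : ℤ × ℤ).2‖ := by
    have h1 := EisensteinSeries.r_mul_max_le Z hx
    have h2 : m ≤ EisensteinSeries.r Z * ‖(![(p : ℤ × ℤ).1, (p : ℤ × ℤ).2] : Fin 2 → ℤ)‖ := by
      calc m ≤ EisensteinSeries.r Z := min_le_left _ _
      _ = EisensteinSeries.r Z * 1 := (mul_one _).symm
      _ ≤ _ := by
          apply mul_le_mul_of_nonneg_left hnorm1 (EisensteinSeries.r_pos Z).le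
    refine h2.trans ?_
    simpa using h1
  exact Real.rpow_le_rpow hmpos.le hmA (by linarith)

lemma aux_not_summable_le_one (z : ℂ) (hz : 0 < z.im) {k : ℝ} (hk0 : 0 ≤ k) (hk1 : k ≤ 1) :
    ¬ Summable (fun p : {p : ℤ × ℤ // Int.gcd p.1 p.2 = 1} =>
      ‖(p : ℤ × ℤ).1 * z + (p : ℤ × ℤ).2‖ ^ (-k)) := by
  intro hf
  have hinj : Function.Injective (fun d : ℤ =>
      (⟨(1, d), by simp [Int.gcd]⟩ : {p : ℤ × ℤ // Int.gcd p.1 p.2 = 1})) :=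
    fun a b hab => by
      simpa using congrArg (fun p : {p : ℤ × ℤ // Int.gcd p.1 p.2 = 1} => (p : ℤ × ℤ).2) hab
  have h1 : Summable (fun d : ℤ => ‖z + d‖ ^ (-k)) := by
    have := hf.comp_injective hinj
    apply this.congr
    intro d
    simp [Function.comp]
  have h2 : Summable (fun d : ℤ => ((‖z‖ + 1) * (|(d : ℝ)| + 1)) ^ (-k)) := by
    apply h1.of_nonneg_of_le (fun d => Real.rpow_nonneg (by positivity) _)
    intro d
    apply Real.rpow_le_rpow_of_nonpos
    · have : (z + (d : ℂ)) ≠ 0 := by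
        have := aux_lin_ne_zero z hz (c := 1) (d := d) (by simp)
        simpa using this
      exact norm_pos_iff.mpr this
    · calc ‖z + (d:ℂ)‖ ≤ ‖z‖ + ‖(d : ℂ)‖ :=
          norm_add_le _ _
      _ = ‖z‖ + |(d : ℝ)| := by
          simp [Complex.norm_intCast]
      _ ≤ (‖z‖ + 1) * (|(d : ℝ)| + 1) := by nlinarith [norm_nonneg z, abs_nonneg (d:ℝ)]
    · linarith
  have h3 : Summable (fun d : ℤ => (|(d : ℝ)| + 1) ^ (-k)) := by
    have hc : (0 : ℝ) < (‖z‖ + 1) ^ (-k) :=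
      Real.rpow_pos_of_pos (by positivity) _
    rw [← summable_mul_left_iff hc.ne']
    apply h2.congr
    intro d
    rw [← Real.mul_rpow (by positivity) (by positivity)]
  have h4 : Summable (fun n : ℕ => ((n : ℝ) + 1) ^ (-k)) := by
    have := h3.comp_injective (fun a b hab => Int.ofNat.inj hab : Function.Injective (fun n : ℕ => (n : ℤ)))
    apply this.congr
    intro n
    simp [Function.comp]
  have h5 : Summable (fun n : ℕ => ((n : ℝ)) ^ (-k)) := by
    rw [← summable_nat_add_iff 1]
    apply h4.congr
    intro n
    push_cast
    ring_nf
  have := Real.summable_nat_rpow.mp h5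
  linarith

lemma aux_gcd_pos (a b : ℕ) : 0 < Int.gcd ((a : ℤ) + 1) ((a : ℤ) + (b : ℤ) + 1) := by
  apply Int.gcd_pos_of_ne_zero_left
  omega

set_option maxHeartbeats 1000000 in
lemma aux_not_summable_le_two (z : ℂ) (hz : 0 < z.im) {k : ℝ} (hk1 : 1 < k) (hk2 : k ≤ 2) :
    ¬ Summable (fun p : {p : ℤ × ℤ // Int.gcd p.1 p.2 = 1} =>
      ‖(p : ℤ × ℤ).1 * z + (p : ℤ × ℤ).2‖ ^ (-k)) := by
  intro hf
  set S := {p : ℤ × ℤ // Int.gcd p.1 p.2 = 1} with hS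
  -- the zeta-like factor
  have hzeta : Summable (fun g : ℕ => ((g : ℝ) + 1) ^ (-k)) := by
    have h0 : Summable (fun n : ℕ => ((n : ℝ)) ^ (-k)) :=
      Real.summable_nat_rpow.mpr (by linarith)
    have h1 := (summable_nat_add_iff 1).mpr h0
    apply h1.congr
    intro n
    push_cast
    ring_nf
  have hprod : Summable (fun q : ℕ × S =>
      ((q.1 : ℝ) + 1) ^ (-k) * ‖(q.2 : ℤ × ℤ).1 * z + (q.2 : ℤ × ℤ).2‖ ^ (-k)) :=
    hzeta.mul_of_nonneg hf (fun _ => Real.rpow_nonneg (by positivity) _)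
      (fun _ => Real.rpow_nonneg (norm_nonneg _) _)
  -- the map from ℕ × ℕ into ℕ × S
  set c : ℕ → ℤ := fun a => (a : ℤ) + 1 with hc
  set d : ℕ → ℕ → ℤ := fun a b => (a : ℤ) + (b : ℤ) + 1 with hd
  set g : ℕ → ℕ → ℕ := fun a b => Int.gcd (c a) (d a b) with hg
  have hgpos : ∀ a b, 0 < g a b := fun a b => aux_gcd_pos a b
  set T : ℕ × ℕ → ℕ × S := fun x =>
    (g x.1 x.2 - 1, ⟨(c x.1 / (g x.1 x.2 : ℤ), d x.1 x.2 / (g x.1 x.2 : ℤ)),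
      Int.gcd_div_gcd_div_gcd (hgpos x.1 x.2)⟩) with hT
  have hgc : ∀ a b, ((g a b : ℤ)) * (c a / (g a b : ℤ)) = c a :=
    fun a b => Int.mul_ediv_cancel' (Int.gcd_dvd_left _ _)
  have hgd : ∀ a b, ((g a b : ℤ)) * (d a b / (g a b : ℤ)) = d a b :=
    fun a b => Int.mul_ediv_cancel' (Int.gcd_dvd_right _ _)
  have hTinj : Function.Injective T := by
    intro x y hxy
    have h1 : g x.1 x.2 - 1 = g y.1 y.2 - 1 := congrArg Prod.fst hxy
    have hgeq : g x.1 x.2 = g y.1 y.2 := by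
      have := hgpos x.1 x.2
      have := hgpos y.1 y.2
      omega
    have h2 := congrArg (fun q : ℕ × S => ((q.2 : ℤ × ℤ))) hxy
    simp only [hT] at h2
    have h2a : c x.1 / (g x.1 x.2 : ℤ) = c y.1 / (g y.1 y.2 : ℤ) := congrArg Prod.fst h2
    have h2b : d x.1 x.2 / (g x.1 x.2 : ℤ) = d y.1 y.2 / (g y.1 y.2 : ℤ) := congrArg Prod.snd h2
    have hceq : c x.1 = c y.1 := by
      rw [← hgc x.1 x.2, h2a, hgeq, hgc y.1 y.2]
    have hdeq : d x.1 x.2 = d y.1 y.2 := by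
      rw [← hgd x.1 x.2, h2b, hgeq, hgd y.1 y.2]
    simp only [hc, hd] at hceq hdeq
    have : x.1 = y.1 := by omega
    have : x.2 = y.2 := by omega
    exact Prod.ext ‹x.1 = y.1› ‹x.2 = y.2›
  have hcomp := hprod.comp_injective hTinj
  -- identify the composed values
  have habs : ∀ a b, ((g a b : ℝ)) * ‖(c a / (g a b : ℤ) : ℤ) * z +
      (d a b / (g a b : ℤ) : ℤ)‖ = ‖(c a : ℂ) * z + (d a b : ℂ)‖ := by
    intro a b
    have h1 : ((g a b : ℝ)) = ‖((g a b : ℕ) : ℂ)‖ := by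
      rw [Complex.norm_natCast]
    rw [h1, ← norm_mul]
    congr 1
    have e1 : ((g a b : ℕ) : ℂ) * ((c a / (g a b : ℤ) : ℤ) : ℂ) = (c a : ℂ) := by
      exact_mod_cast congrArg (fun t : ℤ => (t : ℂ)) (hgc a b)
    have e2 : ((g a b : ℕ) : ℂ) * ((d a b / (g a b : ℤ) : ℤ) : ℂ) = (d a b : ℂ) := by
      exact_mod_cast congrArg (fun t : ℤ => (t : ℂ)) (hgd a b)
    calc ((g a b : ℕ) : ℂ) * (((c a / (g a b : ℤ) : ℤ) : ℂ) * z + ((d a b / (g a b : ℤ) : ℤ) : ℂ))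
        = (((g a b : ℕ) : ℂ) * ((c a / (g a b : ℤ) : ℤ) : ℂ)) * z +
          ((g a b : ℕ) : ℂ) * ((d a b / (g a b : ℤ) : ℤ) : ℂ) := by ring
      _ = (c a : ℂ) * z + (d a b : ℂ) := by rw [e1, e2]
  have hval : Summable (fun x : ℕ × ℕ =>
      ‖(c x.1 : ℂ) * z + (d x.1 x.2 : ℂ)‖ ^ (-k)) := by
    apply hcomp.congr
    intro x
    have hcast : (((g x.1 x.2 - 1 : ℕ) : ℝ) + 1) = (g x.1 x.2 : ℝ) := by
      have := hgpos x.1 x.2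
      push_cast [Nat.cast_sub (by omega : 1 ≤ g x.1 x.2)]
      ring
    show (((g x.1 x.2 - 1 : ℕ) : ℝ) + 1) ^ (-k) *
        ‖((c x.1 / (g x.1 x.2 : ℤ) : ℤ) : ℂ) * z +
          ((d x.1 x.2 / (g x.1 x.2 : ℤ) : ℤ) : ℂ)‖ ^ (-k) = _
    rw [hcast, ← Real.mul_rpow (by positivity) (norm_nonneg _), habs]
  -- lower bound the terms
  have hG : Summable (fun x : ℕ × ℕ =>
      ((‖z‖ + 1) * ((x.1 : ℝ) + (x.2 : ℝ) + 2)) ^ (-k)) := by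
    apply hval.of_nonneg_of_le (fun x => Real.rpow_nonneg (by positivity) _)
    intro x
    apply Real.rpow_le_rpow_of_nonpos
    · have hne : ((c x.1 : ℂ) * z + (d x.1 x.2 : ℂ)) ≠ 0 := by
        apply aux_lin_ne_zero z hz
        rintro ⟨h1, -⟩
        simp only [hc] at h1
        omega
      exact norm_pos_iff.mpr hne
    · have hb1 : ‖(c x.1 : ℂ) * z + (d x.1 x.2 : ℂ)‖ ≤
          ‖(c x.1 : ℂ) * z‖ + ‖(d x.1 x.2 : ℂ)‖ :=
        norm_add_le _ _
      have hb2 : ‖(c x.1 : ℂ) * z‖ = ((x.1 : ℝ) + 1) * ‖z‖ := by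
        rw [norm_mul]
        congr 1
        rw [Complex.norm_intCast]
        simp only [hc]
        push_cast
        exact abs_of_nonneg (by positivity)
      have hb3 : ‖(d x.1 x.2 : ℂ)‖ = (x.1 : ℝ) + (x.2 : ℝ) + 1 := by
        rw [Complex.norm_intCast]
        simp only [hd]
        push_cast
        exact abs_of_nonneg (by positivity)
      have hZ0 : (0:ℝ) ≤ ‖z‖ := norm_nonneg z
      have ha0 : (0:ℝ) ≤ (x.1 : ℝ) := Nat.cast_nonneg _
      have hb0 : (0:ℝ) ≤ (x.2 : ℝ) := Nat.cast_nonneg _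
      nlinarith [hb1]
    · linarith
  -- strip the constant
  have hCpos : (0:ℝ) < (‖z‖ + 1) ^ (-k) := Real.rpow_pos_of_pos (by positivity) _
  have hG2 : Summable (fun x : ℕ × ℕ => ((x.1 : ℝ) + (x.2 : ℝ) + 2) ^ (-k)) := by
    rw [← summable_mul_left_iff hCpos.ne']
    exact hG.congr fun x => Real.mul_rpow (by positivity) (by positivity)
  -- Fubini
  have hfib : ∀ a : ℕ, Summable (fun b : ℕ => ((a : ℝ) + (b : ℝ) + 2) ^ (-k)) :=
    fun a => hG2.prod_factor a
  have hsum : Summable (fun a : ℕ => ∑' b : ℕ, ((a : ℝ) + (b : ℝ) + 2) ^ (-k)) :=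
    (hG2.hasSum.prod_fiberwise (fun a => (hfib a).hasSum)).summable
  have hlow : ∀ a : ℕ, (2:ℝ) ^ (-k) / 2 * ((a : ℝ) + 2) ^ (1 - k) ≤
      ∑' b : ℕ, ((a : ℝ) + (b : ℝ) + 2) ^ (-k) := by
    intro a
    have h1 : ∑ b ∈ Finset.range (a + 1), ((a : ℝ) + (b : ℝ) + 2) ^ (-k) ≤
        ∑' b : ℕ, ((a : ℝ) + (b : ℝ) + 2) ^ (-k) :=
      Summable.sum_le_tsum _ (fun b _ => Real.rpow_nonneg (by positivity) _) (hfib a)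
    have h2 : ((a : ℝ) + 1) * ((2 * ((a : ℝ) + 2)) ^ (-k)) ≤
        ∑ b ∈ Finset.range (a + 1), ((a : ℝ) + (b : ℝ) + 2) ^ (-k) := by
      have hcard := Finset.card_nsmul_le_sum (Finset.range (a + 1))
        (fun b : ℕ => ((a : ℝ) + (b : ℝ) + 2) ^ (-k)) ((2 * ((a : ℝ) + 2)) ^ (-k)) ?_
      · rw [Finset.card_range, nsmul_eq_mul] at hcard
        push_cast at hcard
        exact hcard
      · intro b hb
        apply Real.rpow_le_rpow_of_nonpos (by positivity)
        · have : (b : ℝ) ≤ (a : ℝ) := by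
            exact_mod_cast Nat.lt_succ_iff.mp (Finset.mem_range.mp hb)
          linarith
        · linarith
    refine le_trans ?_ (h2.trans h1)
    have e1 : ((a : ℝ) + 2) ^ (1 - k) = ((a : ℝ) + 2) * ((a : ℝ) + 2) ^ (-k) := by
      rw [show (1 - k) = 1 + (-k) by ring, Real.rpow_add (by positivity), Real.rpow_one]
    have e2 : (2 * ((a : ℝ) + 2)) ^ (-k) = (2:ℝ) ^ (-k) * ((a : ℝ) + 2) ^ (-k) :=
      Real.mul_rpow (by norm_num) (by positivity)
    rw [e1, e2]
    have hp1 : (0:ℝ) < (2:ℝ) ^ (-k) := Real.rpow_pos_of_pos (by norm_num) _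
    have hp2 : (0:ℝ) ≤ ((a : ℝ) + 2) ^ (-k) := Real.rpow_nonneg (by positivity) _
    nlinarith [mul_nonneg (mul_nonneg hp1.le hp2) (Nat.cast_nonneg (α := ℝ) a)]
  have hA : Summable (fun a : ℕ => (2:ℝ) ^ (-k) / 2 * ((a : ℝ) + 2) ^ (1 - k)) :=
    hsum.of_nonneg_of_le (fun a => by positivity) hlow
  have hA2 : Summable (fun a : ℕ => ((a : ℝ) + 2) ^ (1 - k)) := by
    have hp : (0:ℝ) < (2:ℝ) ^ (-k) / 2 := by positivity
    exact (summable_mul_left_iff hp.ne').mp hA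
  have hA3 : Summable (fun n : ℕ => ((n : ℝ)) ^ (1 - k)) := by
    rw [← summable_nat_add_iff 2]
    apply hA2.congr
    intro n
    congr 1
    push_cast
    ring
  have := Real.summable_nat_rpow.mp hA3
  linarith

/-- For every `z` in the upper half-plane and every `s : ℂ`, the family,
indexed by coprime integer pairs `(c, d)`, of terms `(Im z)^s * (|c*z + d|^2)^(-s)`
is summable (absolutely convergent) if and only if `Re s > 1`. -/
theorem eisenstein_summable_iff (z : ℂ) (hz : 0 < z.im) (s : ℂ) :
    Summable (fun p : {p : ℤ × ℤ // Int.gcd p.1 p.2 = 1} =>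
      (z.im : ℂ) ^ s * ((‖(p : ℤ × ℤ).1 * z + (p : ℤ × ℤ).2‖ ^ 2 : ℝ) : ℂ) ^ (-s))
      ↔ 1 < s.re := by
  have key : ∀ p : {p : ℤ × ℤ // Int.gcd p.1 p.2 = 1},
      ‖(z.im : ℂ) ^ s * ((‖(p : ℤ × ℤ).1 * z + (p : ℤ × ℤ).2‖ ^ 2 : ℝ) : ℂ) ^ (-s)‖
      = z.im ^ s.re *
        ‖(p : ℤ × ℤ).1 * z + (p : ℤ × ℤ).2‖ ^ (-(2 * s.re)) := by
    intro p
    have hA : 0 < ‖(p : ℤ × ℤ).1 * z + (p : ℤ × ℤ).2‖ := aux_abs_pos z hz p.2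
    rw [norm_mul, Complex.norm_cpow_eq_rpow_re_of_pos hz,
      Complex.norm_cpow_eq_rpow_re_of_pos (by positivity :
        (0:ℝ) < ‖(p : ℤ × ℤ).1 * z + (p : ℤ × ℤ).2‖ ^ 2)]
    congr 1
    rw [Complex.neg_re, ← Real.rpow_natCast (‖(p : ℤ × ℤ).1 * z + (p : ℤ × ℤ).2‖) 2,
      ← Real.rpow_mul (norm_nonneg _)]
    congr 1
    push_cast
    ring
  have hcpos : (0:ℝ) < z.im ^ s.re := Real.rpow_pos_of_pos hz _
  constructor
  · intro h
    have hn : Summable (fun p : {p : ℤ × ℤ // Int.gcd p.1 p.2 = 1} =>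
        ‖(z.im : ℂ) ^ s * ((‖(p : ℤ × ℤ).1 * z + (p : ℤ × ℤ).2‖ ^ 2 : ℝ) : ℂ) ^ (-s)‖) :=
      summable_norm_iff.mpr h
    have hre : Summable (fun p : {p : ℤ × ℤ // Int.gcd p.1 p.2 = 1} =>
        z.im ^ s.re * ‖(p : ℤ × ℤ).1 * z + (p : ℤ × ℤ).2‖ ^ (-(2 * s.re))) :=
      hn.congr key
    have hre2 : Summable (fun p : {p : ℤ × ℤ // Int.gcd p.1 p.2 = 1} =>
        ‖(p : ℤ × ℤ).1 * z + (p : ℤ × ℤ).2‖ ^ (-(2 * s.re))) :=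
      (summable_mul_left_iff hcpos.ne').mp hre
    by_contra hcon
    push_neg at hcon
    rcases le_or_gt (2 * s.re) 0 with hk | hk
    · exact aux_not_summable_nonpos z hz hk hre2
    · rcases le_or_gt (2 * s.re) 1 with hk1 | hk1
      · exact aux_not_summable_le_one z hz hk.le hk1 hre2
      · exact aux_not_summable_le_two z hz hk1 (by linarith) hre2
  · intro h
    apply Summable.of_norm
    have hs : Summable (fun p : {p : ℤ × ℤ // Int.gcd p.1 p.2 = 1} =>
        ‖(p : ℤ × ℤ).1 * z + (p : ℤ × ℤ).2‖ ^ (-(2 * s.re))) :=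
      aux_summable_of_lt z hz (by linarith)
    exact (hs.mul_left (z.im ^ s.re)).congr fun p => (key p).symm
end

section
/- For every fixed z ∈ ℍ, the function s ↦ E(z,s) is holomorphic (complex differentiable) on the half-plane {s ∈ ℂ : Re s > 1}. -/
open Complex

/-- The level-one real-analytic Eisenstein series
`E(z,s) = (1/2) · Σ_{(c,d) ∈ ℤ², gcd(c,d)=1} (Im z)^s · (|cz+d|²)^(−s)`. -/
noncomputable def eisensteinE (z : ℂ) (s : ℂ) : ℂ :=
  (1 / 2) * ∑' p : {p : ℤ × ℤ // Int.gcd p.1 p.2 = 1},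
    ((z.im : ℂ)) ^ s *
      ((‖((p : ℤ × ℤ).1 * z + (p : ℤ × ℤ).2 : ℂ)‖ ^ 2 : ℝ) : ℂ) ^ (-s)

/-- Positivity of the summand base `|cz+d|` for coprime pairs. -/
lemma eisenstein_abs_pos (z : ℂ) (hz : 0 < z.im) (p : ℤ × ℤ) (hp : Int.gcd p.1 p.2 = 1) :
    0 < ‖(p.1 * z + p.2 : ℂ)‖ := by
  have hx : (![p.1, p.2] : Fin 2 → ℤ) ≠ 0 := by
    intro h
    have h1 : p.1 = 0 := congrFun h 0
    have h2 : p.2 = 0 := congrFun h 1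
    simp [h1, h2] at hp
  have key := EisensteinSeries.r_mul_max_le (⟨z, hz⟩ : UpperHalfPlane) hx
  simp only [Matrix.cons_val_zero, Matrix.cons_val_one, Matrix.head_cons] at key
  have h1 : 0 < EisensteinSeries.r (⟨z, hz⟩ : UpperHalfPlane) * ‖(![p.1, p.2] : Fin 2 → ℤ)‖ :=
    mul_pos (EisensteinSeries.r_pos _) (norm_pos_iff.mpr hx)
  exact lt_of_lt_of_le h1 key

/-- Summability of `|cz+d|^{-2t}` over coprime pairs, for `t > 1`. -/
lemma eisenstein_summable (z : ℂ) (hz : 0 < z.im) {t : ℝ} (ht : 1 < t) :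
    Summable fun p : {p : ℤ × ℤ // Int.gcd p.1 p.2 = 1} =>
      (‖((p : ℤ × ℤ).1 * z + (p : ℤ × ℤ).2 : ℂ)‖ ^ 2) ^ (-t) := by
  have h2t : (2 : ℝ) < 2 * t := by linarith
  have hmaj : Summable fun q : ℤ × ℤ => ‖(![q.1, q.2] : Fin 2 → ℤ)‖ ^ (-(2 * t)) := by
    have := ((finTwoArrowEquiv ℤ).symm.summable_iff).2
      (EisensteinSeries.summable_one_div_norm_rpow h2t)
    simpa [Function.comp_def, finTwoArrowEquiv_symm_apply] using this
  have hmaj' : Summable fun p : {p : ℤ × ℤ // Int.gcd p.1 p.2 = 1} =>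
      EisensteinSeries.r (⟨z, hz⟩ : UpperHalfPlane) ^ (-(2 * t)) *
        ‖(![(p : ℤ × ℤ).1, (p : ℤ × ℤ).2] : Fin 2 → ℤ)‖ ^ (-(2 * t)) :=
    ((hmaj.subtype _).mul_left _)
  refine hmaj'.of_nonneg_of_le (fun p => by positivity) fun p => ?_
  have hA : 0 ≤ ‖((p : ℤ × ℤ).1 * z + (p : ℤ × ℤ).2 : ℂ)‖ := norm_nonneg _
  have key := EisensteinSeries.summand_bound (⟨z, hz⟩ : UpperHalfPlane)
    (by linarith : (0:ℝ) ≤ 2 * t) ![(p : ℤ × ℤ).1, (p : ℤ × ℤ).2]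
  simp only [Matrix.cons_val_zero, Matrix.cons_val_one, Matrix.head_cons] at key
  calc (‖((p : ℤ × ℤ).1 * z + (p : ℤ × ℤ).2 : ℂ)‖ ^ 2) ^ (-t)
      = ‖((p : ℤ × ℤ).1 * z + (p : ℤ × ℤ).2 : ℂ)‖ ^ (-(2 * t)) := by
        rw [← Real.rpow_natCast ‖((p : ℤ × ℤ).1 * z + (p : ℤ × ℤ).2 : ℂ)‖ 2, ← Real.rpow_mul hA]
        push_cast
        ring_nf
    _ ≤ _ := key

/-- For every fixed `z ∈ ℍ`, the function `s ↦ E(z, s)` is holomorphic on the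
half-plane `{s : Re s > 1}`. -/
theorem eisensteinE_holomorphic_in_s (z : ℂ) (hz : 0 < z.im) :
    DifferentiableOn ℂ (fun s : ℂ => eisensteinE z s) {s : ℂ | 1 < s.re} := by
  set ι := {p : ℤ × ℤ // Int.gcd p.1 p.2 = 1}
  set R : ι → ℝ := fun p => ‖((p : ℤ × ℤ).1 * z + (p : ℤ × ℤ).2 : ℂ)‖ ^ 2 with hR
  have hRpos : ∀ p : ι, 0 < R p := fun p =>
    pow_pos (eisenstein_abs_pos z hz _ p.2) 2
  set F : ι → ℂ → ℂ := fun p s =>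
    ((z.im : ℂ)) ^ s * ((R p : ℝ) : ℂ) ^ (-s) with hF
  have him : (z.im : ℂ) ≠ 0 := by
    exact_mod_cast ne_of_gt (by exact_mod_cast hz : (0:ℝ) < z.im)
  have hFdiff : ∀ p : ι, Differentiable ℂ (F p) := by
    intro p
    exact (differentiable_id.const_cpow (Or.inl him)).mul
      (differentiable_id.neg.const_cpow (Or.inl (by
        exact_mod_cast ne_of_gt (hRpos p))))
  have hFnorm : ∀ (p : ι) (s : ℂ), ‖F p s‖ = z.im ^ s.re * R p ^ (-s.re) := by
    intro p s
    rw [hF]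
    simp only [norm_mul]
    rw [Complex.norm_cpow_eq_rpow_re_of_pos hz, Complex.norm_cpow_eq_rpow_re_of_pos (hRpos p),
      Complex.neg_re]
  -- reduce to the tsum
  have key : DifferentiableOn ℂ (fun s : ℂ => ∑' p : ι, F p s) {s : ℂ | 1 < s.re} := by
    intro s₀ hs₀
    have hs₀' : 1 < s₀.re := hs₀
    set ε : ℝ := (s₀.re - 1) / 2 with hε
    have hεpos : 0 < ε := by simp only [hε]; linarith
    set a : ℝ := 1 + ε with ha
    set b : ℝ := s₀.re + ε with hb
    have hab : a ≤ b := by simp only [ha, hb]; linarith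
    set M : ℝ := max (z.im ^ a) (z.im ^ b) with hM
    have hMnonneg : 0 ≤ M := le_trans (Real.rpow_nonneg hz.le a) (le_max_left _ _)
    have hre : ∀ s ∈ Metric.ball s₀ ε, a ≤ s.re ∧ s.re ≤ b := by
      intro s hs
      have : |s.re - s₀.re| ≤ |(s - s₀).re| := by rw [Complex.sub_re]
      have h2 : |(s - s₀).re| ≤ ‖s - s₀‖ := Complex.abs_re_le_norm _
      have h3 : ‖s - s₀‖ < ε := by
        rw [← Complex.dist_eq]; exact hs
      have h4 : |s.re - s₀.re| < ε := lt_of_le_of_lt (this.trans h2) h3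
      rw [abs_lt] at h4
      constructor
      · simp only [ha, hε] at *; linarith
      · simp only [hb]; linarith
    have hsum : Summable fun p : ι => M * (R p ^ (-a) + R p ^ (-b)) := by
      refine Summable.mul_left M ?_
      exact (eisenstein_summable z hz (by simp only [ha]; linarith)).add
        (eisenstein_summable z hz (by simp only [hb]; linarith))
    have hbound : ∀ (p : ι) (s : ℂ), s ∈ Metric.ball s₀ ε →
        ‖F p s‖ ≤ M * (R p ^ (-a) + R p ^ (-b)) := by
      intro p s hs
      obtain ⟨h1, h2⟩ := hre s hs
      rw [hFnorm p s]
      have hzim : z.im ^ s.re ≤ M := by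
        rcases le_total z.im 1 with h | h
        · exact le_trans (Real.rpow_le_rpow_of_exponent_ge hz h h1) (le_max_left _ _)
        · exact le_trans (Real.rpow_le_rpow_of_exponent_le h h2) (le_max_right _ _)
      have hRb : R p ^ (-s.re) ≤ R p ^ (-a) + R p ^ (-b) := by
        rcases le_total (R p) 1 with h | h
        · refine le_trans (le_trans (Real.rpow_le_rpow_of_exponent_ge (hRpos p) h
            (by linarith : -b ≤ -s.re)) le_rfl) ?_
          exact le_add_of_nonneg_left (Real.rpow_nonneg (hRpos p).le _)
        · refine le_trans (Real.rpow_le_rpow_of_exponent_le h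
            (by linarith : -s.re ≤ -a)) ?_
          exact le_add_of_nonneg_right (Real.rpow_nonneg (hRpos p).le _)
      exact mul_le_mul hzim hRb (Real.rpow_nonneg (hRpos p).le _) hMnonneg
    have hball : DifferentiableOn ℂ (fun s : ℂ => ∑' p : ι, F p s) (Metric.ball s₀ ε) :=
      differentiableOn_tsum_of_summable_norm hsum
        (fun p => (hFdiff p).differentiableOn) Metric.isOpen_ball
        (fun p w hw => hbound p w hw)
    exact ((hball.differentiableAt
      (Metric.isOpen_ball.mem_nhds (Metric.mem_ball_self hεpos)))).differentiableWithinAt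
  have : (fun s : ℂ => eisensteinE z s) =
      fun s : ℂ => (1 / 2 : ℂ) * ∑' p : ι, F p s := by
    funext s
    rfl
  rw [this]
  exact key.const_mul _
end

section
/- Let U ⊂ ℂ be an open neighbourhood of 1/2 that is invariant under s ↦ 1−s, let P ⊂ U be closed in U and discrete, and let β : U → ℂ be holomorphic on U ∖ P and meromorphic on U (at every point of P, β has at worst a pole). If β(s)·β(1−s) = 1 for all s ∈ U with s ∉ P and 1−s ∉ P, then β does not have a pole at 1/2: the limit v = lim_{s → 1/2, s ≠ 1/2} β(s) exists in ℂ and satisfies v = 1 or v = −1. -/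
open Complex Filter Topology

/-- Let `U` be an open neighbourhood of `1/2` invariant under `s ↦ 1 - s`, let
`P ⊆ U` be closed in `U` and discrete, and let `β` be holomorphic on `U \ P` and meromorphic on
`U`. If `β(s)·β(1-s) = 1` whenever both factors are defined, then `β` has no pole at `1/2`: the
limit `v = lim_{s → 1/2, s ≠ 1/2} β(s)` exists and equals `1` or `-1`. -/
theorem functional_equation_no_pole_at_half (U : Set ℂ) (hU : IsOpen U)
    (hhalf : (1 / 2 : ℂ) ∈ U) (hsym : ∀ s ∈ U, 1 - s ∈ U)
    (P : Set ℂ) (hPU : P ⊆ U) (hPclosed : U ∩ closure P ⊆ P)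
    (hPdisc : DiscreteTopology P)
    (β : ℂ → ℂ) (hβ : DifferentiableOn ℂ β (U \ P)) (hβm : MeromorphicOn β U)
    (hfe : ∀ s ∈ U, s ∉ P → (1 - s) ∉ P → β s * β (1 - s) = 1) :
    ∃ v : ℂ, Tendsto β (nhdsWithin (1 / 2 : ℂ) {(1 / 2 : ℂ)}ᶜ) (nhds v) ∧
      (v = 1 ∨ v = -1) := by
  set x : ℂ := 1 / 2 with hxdef
  have hmer : MeromorphicAt β x := hβm x hhalf
  -- the symmetry map preserves the punctured neighbourhood filter at 1/2
  have hmap : Tendsto (fun z : ℂ => 1 - z) (𝓝[≠] x) (𝓝[≠] x) := by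
    have hc : Tendsto (fun z : ℂ => 1 - z) (𝓝 x) (𝓝 x) := by
      have h := Continuous.tendsto (f := fun z : ℂ => 1 - z) (by continuity) x
      have hx1 : (1 : ℂ) - x = x := by rw [hxdef]; ring
      rwa [hx1] at h
    refine tendsto_nhdsWithin_of_tendsto_nhds_of_eventually_within _
      (hc.mono_left nhdsWithin_le_nhds) ?_
    filter_upwards [self_mem_nhdsWithin] with z hz
    simp only [Set.mem_compl_iff, Set.mem_singleton_iff] at hz ⊢
    intro h
    apply hz
    have : z = 1 - x := by linear_combination -h
    rw [this, hxdef]; ring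
  -- eventually off P
  have hnotP : ∀ᶠ z in 𝓝[≠] x, z ∉ P := by
    by_cases hxP : x ∈ P
    · have hbot : 𝓝[≠] x ⊓ 𝓟 P = ⊥ := discreteTopology_subtype_iff.mp hPdisc x hxP
      rw [inf_principal_eq_bot] at hbot
      exact hbot
    · have hxc : x ∉ closure P := fun h => hxP (hPclosed ⟨hhalf, h⟩)
      have : (closure P)ᶜ ∈ 𝓝 x := isClosed_closure.isOpen_compl.mem_nhds hxc
      filter_upwards [mem_nhdsWithin_of_mem_nhds this] with z hz hzP
      exact hz (subset_closure hzP)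
  have hmemU : ∀ᶠ z in 𝓝[≠] x, z ∈ U :=
    mem_nhdsWithin_of_mem_nhds (hU.mem_nhds hhalf)
  -- the functional equation holds eventually on the punctured neighbourhood
  have hfe' : ∀ᶠ z in 𝓝[≠] x, β z * β (1 - z) = 1 := by
    filter_upwards [hmemU, hnotP, hmap.eventually hnotP] with z hz1 hz2 hz3
    exact hfe z hz1 hz2 hz3
  have hne : (𝓝[≠] x).NeBot := by infer_instance
  -- order is not ⊤
  have htop : meromorphicOrderAt β x ≠ ⊤ := by
    intro h
    rw [meromorphicOrderAt_eq_top_iff] at h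
    have : ∀ᶠ z in 𝓝[≠] x, (0 : ℂ) = 1 := by
      filter_upwards [h, hfe'] with z h1 h2
      rw [h1, zero_mul] at h2; exact h2.symm ▸ rfl
    exact one_ne_zero ((this.exists).choose_spec).symm
  obtain ⟨n, hn⟩ := WithTop.ne_top_iff_exists.mp htop
  obtain ⟨g, hg_an, hg_ne, hg_eq⟩ := (meromorphicOrderAt_eq_int_iff hmer (n := n)).mp hn.symm
  -- the symmetrized unit
  have hg1_an : AnalyticAt ℂ (fun z => g (1 - z)) x := by
    have h1 : AnalyticAt ℂ (fun z : ℂ => 1 - z) x := by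
      exact (analyticAt_const).sub (analyticAt_id)
    have h2 : AnalyticAt ℂ g ((fun z : ℂ => 1 - z) x) := by
      have : (fun z : ℂ => 1 - z) x = x := by rw [hxdef]; ring
      rw [this]; exact hg_an
    exact h2.comp h1
  -- n = 0 by uniqueness of the order of the constant function 1
  have hn0 : n = 0 := by
    have key : (0 : ℤ) = 2 * n := by
      refine AnalyticAt.unique_eventuallyEq_zpow_smul_nonzero (f := fun _ : ℂ => (1 : ℂ))
        (z₀ := x) ⟨fun _ => 1, analyticAt_const, one_ne_zero, ?_⟩
        ⟨fun z => (-1 : ℂ) ^ n * (g z * g (1 - z)), ?_, ?_, ?_⟩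
      · filter_upwards with z; simp
      · exact (analyticAt_const.mul (hg_an.mul hg1_an))
      · have hx1 : (1 : ℂ) - x = x := by rw [hxdef]; ring
        simp only [hx1]
        exact mul_ne_zero (zpow_ne_zero _ (neg_ne_zero.mpr one_ne_zero))
          (mul_ne_zero hg_ne hg_ne)
      · filter_upwards [hfe', hg_eq, hmap.eventually hg_eq, self_mem_nhdsWithin]
          with z h1 h2 h3 hz
        have hzx : z ≠ x := hz
        have hsub : (1 : ℂ) - z - x = -(z - x) := by rw [hxdef]; ring
        rw [h2, h3, hsub] at h1
        have hzx' : z - x ≠ 0 := sub_ne_zero.mpr hzx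
        have key2 : (z - x) ^ (2 * n) * ((-1 : ℂ) ^ n * (g z * g (1 - z)))
            = ((z - x) ^ n * g z) * ((-(z - x)) ^ n * g (1 - z)) := by
          rw [two_mul, zpow_add₀ hzx', show (-(z - x)) = (-1) * (z - x) by ring, mul_zpow]
          ring
        rw [smul_eq_mul, smul_eq_mul] at h1
        rw [smul_eq_mul, key2]
        exact h1.symm
    omega
  -- hence β tends to g x
  have hβ_eq : ∀ᶠ z in 𝓝[≠] x, β z = g z := by
    filter_upwards [hg_eq] with z hz
    rw [hz, hn0]; simp
  have htend : Tendsto β (𝓝[≠] x) (𝓝 (g x)) := by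
    have : Tendsto g (𝓝[≠] x) (𝓝 (g x)) :=
      (hg_an.continuousAt.tendsto).mono_left nhdsWithin_le_nhds
    exact this.congr' (hβ_eq.mono fun z h => h.symm)
  refine ⟨g x, htend, ?_⟩
  -- v * v = 1
  have htend2 : Tendsto (fun z => β z * β (1 - z)) (𝓝[≠] x) (𝓝 (g x * g x)) :=
    htend.mul (htend.comp hmap)
  have htend1 : Tendsto (fun z => β z * β (1 - z)) (𝓝[≠] x) (𝓝 (1 : ℂ)) :=
    tendsto_const_nhds.congr' (hfe'.mono fun z h => h.symm)
  have hsq : g x * g x = 1 := tendsto_nhds_unique htend2 htend1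
  exact mul_self_eq_one_iff.mp hsq
end
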